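/- Let A be a finite set of 2-element subsets of {1,…,n}, P = {p ∈ ℝ^n : p_i + p_j ≤ 0 for all {i,j} ∈ A}, and σ(p) = Σ p_k. If there exists a nonzero p ∈ P with σ(p) ≥ 0, then there exists a nonzero p* ∈ P with σ(p*) ≥ 0 and all coordinates p*_k ∈ {-1, 0, 1}. -/

import Mathlib

private lemma step_le {v v' w x y : ℝ} (hv : 0 < v) (hvv' : v < v')
    (hw0 : 0 ≤ w) (hwv' : w ≤ v')
    (hx : x = v ∨ x = -v ∨ x = 0 ∨ v' ≤ x ∨ x ≤ -v')
    (hy : y = v ∨ y = -v ∨ y = 0 ∨ v' ≤ y ∨ y ≤ -v')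
    (hxy : x + y ≤ 0) :
    (if x = v then w else if x = -v then -w else x) +
      (if y = v then w else if y = -v then -w else y) ≤ 0 := by
  rcases hx with hx|hx|hx|hx|hx <;> rcases hy with hy|hy|hy|hy|hy <;>
    split_ifs <;> linarith

private noncomputable def absVals {n : ℕ} (p : Fin n → ℝ) : Finset ℝ :=
  (Finset.univ.filter fun k => p k ≠ 0).image fun k => |p k|

private lemma mem_absVals {n : ℕ} {p : Fin n → ℝ} {x : ℝ} :
    x ∈ absVals p ↔ ∃ k, p k ≠ 0 ∧ |p k| = x := by
  simp [absVals]

private lemma absVals_pos {n : ℕ} {p : Fin n → ℝ} {x : ℝ} (hx : x ∈ absVals p) : 0 < x := by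
  obtain ⟨k, hk, rfl⟩ := mem_absVals.mp hx
  exact abs_pos.mpr hk

private lemma aux_lemma {n : ℕ} (A : Finset (Sym2 (Fin n))) :
    ∀ m : ℕ, ∀ p : Fin n → ℝ, p ≠ 0 →
      (∀ i j : Fin n, s(i, j) ∈ A → p i + p j ≤ 0) → 0 ≤ ∑ k, p k →
      (absVals p).card ≤ m →
      ∃ q : Fin n → ℝ, q ≠ 0 ∧
        (∀ i j : Fin n, s(i, j) ∈ A → q i + q j ≤ 0) ∧
        0 ≤ ∑ k, q k ∧ ∀ k, q k = -1 ∨ q k = 0 ∨ q k = 1 := by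
  intro m
  induction m with
  | zero =>
    intro p hp hpP hpσ hcard
    exfalso
    obtain ⟨k, hk⟩ := Function.ne_iff.mp hp
    have hk' : p k ≠ 0 := hk
    have : |p k| ∈ absVals p := mem_absVals.mpr ⟨k, hk', rfl⟩
    have := Finset.card_pos.mpr ⟨_, this⟩
    omega
  | succ m ih =>
    intro p hp hpP hpσ hcard
    obtain ⟨k0, hk0⟩ := Function.ne_iff.mp hp
    have hk0' : p k0 ≠ 0 := hk0
    have hne : (absVals p).Nonempty := ⟨_, mem_absVals.mpr ⟨k0, hk0', rfl⟩⟩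
    by_cases hc1 : (absVals p).card ≤ 1
    · -- all nonzero entries have the same absolute value; scale
      set c := |p k0| with hc
      have hcpos : 0 < c := abs_pos.mpr hk0'
      have hcmem : c ∈ absVals p := mem_absVals.mpr ⟨k0, hk0', rfl⟩
      have hall : ∀ x ∈ absVals p, x = c := by
        intro x hx
        exact Finset.card_le_one.mp hc1 x hx c hcmem
      refine ⟨fun k => p k / c, ?_, ?_, ?_, ?_⟩
      · intro h
        have h2 := congrFun h k0
        simp only [Pi.zero_apply] at h2
        exact hk0' (by field_simp at h2; simpa using h2)
      · intro i j hij
        have := hpP i j hij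
        have : (p i + p j) / c ≤ 0 := div_nonpos_iff.mpr (Or.inr ⟨this, hcpos.le⟩)
        linarith [this, (add_div (p i) (p j) c).symm]
      · rw [← Finset.sum_div]
        exact div_nonneg hpσ hcpos.le
      · intro k
        by_cases hk : p k = 0
        · right; left; simp [hk]
        · have : |p k| = c := hall _ (mem_absVals.mpr ⟨k, hk, rfl⟩)
          rcases (abs_eq hcpos.le).mp this with h|h
          · right; right; show p k / c = 1; rw [h]; exact div_self hcpos.ne'
          · left; show p k / c = -1; rw [h]; field_simp
    · -- at least two distinct absolute values
      push_neg at hc1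
      obtain ⟨v, hvmem, hvmin⟩ : ∃ v ∈ absVals p, ∀ x ∈ absVals p, v ≤ x :=
        ⟨_, Finset.min'_mem _ hne, fun x hx => Finset.min'_le _ x hx⟩
      have hv : 0 < v := absVals_pos hvmem
      have hne' : ((absVals p).erase v).Nonempty := by
        rw [← Finset.card_pos, Finset.card_erase_of_mem hvmem]
        omega
      obtain ⟨v', hv'mem, hv'min⟩ :
          ∃ v' ∈ (absVals p).erase v, ∀ x ∈ (absVals p).erase v, v' ≤ x :=
        ⟨_, Finset.min'_mem _ hne', fun x hx => Finset.min'_le _ x hx⟩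
      have hv'mem' : v' ∈ absVals p := Finset.mem_of_mem_erase hv'mem
      have hv'ne : v' ≠ v := Finset.ne_of_mem_erase hv'mem
      have hvv' : v < v' :=
        lt_of_le_of_ne (hvmin _ hv'mem') (Ne.symm hv'ne)
      have hbig : ∀ k, p k = v ∨ p k = -v ∨ p k = 0 ∨ v' ≤ p k ∨ p k ≤ -v' := by
        intro k
        by_cases h0 : p k = 0
        · tauto
        have hmem : |p k| ∈ absVals p := mem_absVals.mpr ⟨k, h0, rfl⟩
        by_cases hvk : |p k| = v
        · rcases (abs_eq hv.le).mp hvk with h|h <;> tauto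
        · have hmem' : |p k| ∈ (absVals p).erase v := Finset.mem_erase.mpr ⟨hvk, hmem⟩
          have h2 := hv'min _ hmem'
          rcases abs_cases (p k) with ⟨he, _⟩|⟨he, _⟩
          · right; right; right; left; linarith
          · right; right; right; right; linarith
      -- counts of entries equal to v and -v
      set a := (Finset.univ.filter fun k => p k = v).card with hadef
      set b := (Finset.univ.filter fun k => p k = -v).card with hbdef
      -- generic reduction step
      have hred : ∀ w : ℝ, (w = 0 ∨ w = v') →
          0 ≤ (w - v) * ((a : ℝ) - (b : ℝ)) →
          (fun k => if p k = v then w else if p k = -v then -w else p k) ≠ 0 →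
          ∃ q : Fin n → ℝ, q ≠ 0 ∧
            (∀ i j : Fin n, s(i, j) ∈ A → q i + q j ≤ 0) ∧
            0 ≤ ∑ k, q k ∧ ∀ k, q k = -1 ∨ q k = 0 ∨ q k = 1 := by
        intro w hw01 hsgn hne0
        set pw : Fin n → ℝ := fun k => if p k = v then w else if p k = -v then -w else p k
          with hpwdef
        have hw0 : 0 ≤ w := by rcases hw01 with h|h <;> rw [h] <;> linarith
        have hwv' : w ≤ v' := by rcases hw01 with h|h <;> rw [h] <;> linarith
        have key : ∀ k, pw k = p k +
            ((w - v) * (if p k = v then (1:ℝ) else 0) -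
              (w - v) * (if p k = -v then (1:ℝ) else 0)) := by
          intro k
          simp only [hpwdef]
          split_ifs with h1 h2 <;> linarith
        have hsum : ∑ k, pw k = ∑ k, p k + ((w - v) * a - (w - v) * b) := by
          rw [Finset.sum_congr rfl (fun k _ => key k), Finset.sum_add_distrib,
            Finset.sum_sub_distrib, ← Finset.mul_sum, ← Finset.mul_sum,
            Finset.sum_boole, Finset.sum_boole]
        have hsub : absVals pw ⊆ (absVals p).erase v := by
          intro x hx
          obtain ⟨k, hk0, hkx⟩ := mem_absVals.mp hx
          by_cases h1 : p k = v
          · have hpk : pw k = w := by simp only [hpwdef]; rw [if_pos h1]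
            have hwne : w ≠ 0 := fun h => hk0 (by rw [hpk, h])
            have hwv : w = v' := hw01.resolve_left hwne
            have : x = v' := by
              rw [← hkx, hpk, hwv, abs_of_pos (lt_trans hv hvv')]
            rw [this]; exact hv'mem
          · by_cases h2 : p k = -v
            · have hpk : pw k = -w := by simp only [hpwdef]; rw [if_neg h1, if_pos h2]
              have hwne : w ≠ 0 := fun h => hk0 (by rw [hpk, h, neg_zero])
              have hwv : w = v' := hw01.resolve_left hwne
              have : x = v' := by
                rw [← hkx, hpk, abs_neg, hwv, abs_of_pos (lt_trans hv hvv')]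
              rw [this]; exact hv'mem
            · have hpk : pw k = p k := by simp only [hpwdef]; rw [if_neg h1, if_neg h2]
              have hpkne : p k ≠ 0 := fun h => hk0 (by rw [hpk, h])
              refine Finset.mem_erase.mpr ⟨?_, mem_absVals.mpr ⟨k, hpkne, by rw [← hkx, hpk]⟩⟩
              intro hxv
              have : |p k| = v := by rw [← hpk, hkx, hxv]
              rcases (abs_eq hv.le).mp this with h|h
              · exact h1 h
              · exact h2 h
        have hcard' : (absVals pw).card ≤ m := by
          have h1 : (absVals pw).card ≤ ((absVals p).erase v).card :=
            Finset.card_le_card hsub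
          rw [Finset.card_erase_of_mem hvmem] at h1
          omega
        refine ih pw hne0 ?_ ?_ hcard'
        · intro i j hij
          exact step_le hv hvv' hw0 hwv' (hbig i) (hbig j) (hpP i j hij)
        · rw [hsum]; linarith
      by_cases hab : b ≤ a
      · -- raise the minimal entries to ±v'
        refine hred v' (Or.inr rfl) ?_ ?_
        · have : (b : ℝ) ≤ (a : ℝ) := Nat.cast_le.mpr hab
          have h1 : (0:ℝ) ≤ v' - v := by linarith
          exact mul_nonneg h1 (by linarith)
        · obtain ⟨k1, hk1ne, hk1⟩ := mem_absVals.mp hvmem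
          intro h
          have h2 := congrFun h k1
          simp only [Pi.zero_apply] at h2
          rcases (abs_eq hv.le).mp hk1 with hh|hh
          · rw [if_pos hh] at h2; exact (lt_trans hv hvv').ne' h2
          · have hnv : p k1 ≠ v := by rw [hh]; intro hc; linarith
            rw [if_neg hnv, if_pos hh] at h2
            have : v' = 0 := by linarith [neg_eq_zero.mp h2]
            exact (lt_trans hv hvv').ne' this
      · -- zero out the minimal entries
        push_neg at hab
        refine hred 0 (Or.inl rfl) ?_ ?_
        · have : (a : ℝ) ≤ (b : ℝ) := Nat.cast_le.mpr hab.le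
          nlinarith [mul_nonneg (by linarith : (0:ℝ) ≤ v) (by linarith : (0:ℝ) ≤ (b:ℝ) - (a:ℝ))]
        · obtain ⟨k1, hk1ne, hk1⟩ := mem_absVals.mp hv'mem'
          have hnv : p k1 ≠ v := by
            intro hc; apply hv'ne; rw [← hk1, hc, abs_of_pos hv]
          have hnv' : p k1 ≠ -v := by
            intro hc; apply hv'ne; rw [← hk1, hc, abs_neg, abs_of_pos hv]
          intro h
          have h2 := congrFun h k1
          simp only [Pi.zero_apply] at h2
          rw [if_neg hnv, if_neg hnv'] at h2
          exact hk1ne h2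

/-- If the polyhedral cone `P = {p : pᵢ + pⱼ ≤ 0 for {i,j} ∈ A}` contains a nonzero
vector with nonnegative coordinate sum, then it contains one with all
coordinates in `{-1, 0, 1}`. -/
theorem exists_pm_one_weight (n : ℕ) (A : Finset (Sym2 (Fin n)))
    (hA : ∀ e ∈ A, ¬ e.IsDiag)
    (p : Fin n → ℝ) (hp : p ≠ 0)
    (hpP : ∀ i j : Fin n, s(i, j) ∈ A → p i + p j ≤ 0)
    (hpσ : 0 ≤ ∑ k, p k) :
    ∃ q : Fin n → ℝ, q ≠ 0 ∧
      (∀ i j : Fin n, s(i, j) ∈ A → q i + q j ≤ 0) ∧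
      0 ≤ ∑ k, q k ∧
      ∀ k, q k = -1 ∨ q k = 0 ∨ q k = 1 := by
  exact aux_lemma A (absVals p).card p hp hpP hpσ le_rfl
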